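/- For I of even cardinality, M_I = (1/(n+1)) [ (n+2−|I|)( (1/2)η − Σ_{i∈I} M_{{i}} ) + (|I|−1) Σ_{j∈I^c} M_{{j}} ], where M_{{i}} denotes M_I with I = {i}. -/
import Mathlib


open Finset

/-- The class `η` in the orthogonal basis `{η, ε_1, …, ε_{n+3}}`, `n = 2m`. -/
noncomputable def eta (m : ℕ) : ℝ × (Fin (2*m+3) → ℝ) := (1, 0)

/-- The class `ε_i`. -/
noncomputable def eps (m : ℕ) (i : Fin (2*m+3)) : ℝ × (Fin (2*m+3) → ℝ) :=
  (0, Pi.single i 1)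

/-- The class `M_I := (1/4)η + ((-1)^{|I|}/2)(Σ_{j∉I} ε_j − Σ_{i∈I} ε_i)`. -/
noncomputable def Mcl (m : ℕ) (I : Finset (Fin (2*m+3))) : ℝ × (Fin (2*m+3) → ℝ) :=
  (1/4, fun j => ((-1 : ℝ)^I.card / 2) * (if j ∈ I then -1 else 1))

/-- The intersection form: orthogonal basis with `η² = 4`, `ε_i² = (-1)^m`. -/
noncomputable def Bf (m : ℕ) (x y : ℝ × (Fin (2*m+3) → ℝ)) : ℝ :=
  4 * x.1 * y.1 + (-1 : ℝ)^m * ∑ i, x.2 i * y.2 i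

/-- For `I` of even cardinality,
`M_I = (1/(n+1))[(n+2−|I|)((1/2)η − Σ_{i∈I} M_{i}) + (|I|−1) Σ_{j∈I^c} M_{j}]`
where `n = 2m`. -/
theorem stmt_8 (m : ℕ) (hm : 1 ≤ m) (I : Finset (Fin (2*m+3))) (hI : Even I.card) :
    Mcl m I = (1/(2*(m:ℝ)+1)) •
      (((2*(m:ℝ)+2) - I.card) • ((1/2 : ℝ) • eta m - ∑ i ∈ I, Mcl m {i})
        + ((I.card : ℝ) - 1) • ∑ j ∈ Iᶜ, Mcl m {j}) := by
  have hne : (2*(m:ℝ)+1) ≠ 0 := by positivity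
  have hone : ((-1:ℝ))^I.card = 1 := hI.neg_one_pow
  have hcardc : (Iᶜ.card : ℝ) = (2*m+3 : ℝ) - I.card := by
    have h := Finset.card_le_univ I
    simp only [Fintype.card_fin] at h
    rw [Finset.card_compl, Fintype.card_fin, Nat.cast_sub h]
    push_cast; ring
  apply Prod.ext
  · simp [Mcl, eta, Prod.fst_sum, Finset.sum_const, hcardc]
    field_simp
    ring
  · funext j
    have hsum : ∀ (s : Finset (Fin (2*m+3))),
        ∑ i ∈ s, (Mcl m {i}).2 j = (if j ∈ s then (1:ℝ) else 0) - s.card / 2 := by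
      intro s
      have : ∀ i, (Mcl m {i}).2 j = (if j = i then (1:ℝ) else 0) - 1/2 := by
        intro i
        by_cases h : j = i <;> simp [Mcl, h] <;> ring
      simp only [this, Finset.sum_sub_distrib, Finset.sum_ite_eq, Finset.sum_const]
      simp
      ring
    have hc2 : (Mcl m I).2 j = (1/(2*(m:ℝ)+1)) *
      (((2*(m:ℝ)+2) - I.card) * ((0:ℝ) - ∑ i ∈ I, (Mcl m {i}).2 j)
        + ((I.card : ℝ) - 1) * ∑ j' ∈ Iᶜ, (Mcl m {j'}).2 j) := by
      rw [hsum, hsum, hcardc]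
      simp only [Mcl, hone, Finset.mem_compl]
      by_cases h : j ∈ I <;> simp [h] <;> field_simp <;> ring
    calc (Mcl m I).2 j = _ := hc2
      _ = _ := by
        simp [Prod.snd_sum, Prod.smul_snd, eta, Pi.smul_apply, Finset.sum_apply]
        ring
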